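/- In U_q(so5) with short simple root α (q_α = p = q^{1/2}) and long simple root β, let π_α(s) be the shifted extremal projector of the α-sl2-subalgebra and let \hat f_δ(s) = p^{-2}( f_α^2 f_β [s]_p/[s+2]_p − f_α f_β f_α [2]_p [s]_p/[s+1]_p + f_β f_α^2 ). Then f_α \hat f_δ(s+1) = \hat f_δ(s) ([s+1]_p/[s+3]_p) f_α. -/

import Mathlib

noncomputable section

/-- `(u - u⁻¹)/(p - p⁻¹)`; with `u = p^z` this is the q-number `[z]_p`. -/
def qNum (p u : ℂ) : ℂ := (u - u⁻¹) / (p - p⁻¹)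

/-- The dynamical root vector
`\hat f_δ(s) = p^{-2}( f_α² f_β [s]_p/[s+2]_p - f_α f_β f_α [2]_p [s]_p/[s+1]_p + f_β f_α² )`
of `U_q(so5)`, with `t = p^s`. -/
def fdelta (p t : ℂ) {A : Type*} [Ring A] [Algebra ℂ A] (fa fb : A) : A :=
  (p ^ 2)⁻¹ • ((qNum p t / qNum p (t * p ^ 2)) • (fa * fa * fb)
    - (qNum p (p ^ 2) * qNum p t / qNum p (t * p)) • (fa * fb * fa)
    + fb * fa * fa)

set_option maxHeartbeats 1000000 in
/-- in (the negative part of) `U_q(so5)`, i.e. in any `ℂ`-algebra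
generated by `f_α, f_β` satisfying the two B2 quantum Serre relations (`q = p²`),
one has `f_α·\hat f_δ(s+1) = \hat f_δ(s)·([s+1]_p/[s+3]_p)·f_α`. -/
theorem fa_fdelta_commutation {A : Type*} [Ring A] [Algebra ℂ A]
    (p t : ℂ) (hp0 : p ≠ 0) (hp : ∀ n : ℕ, 0 < n → p ^ n ≠ 1) (ht : t ≠ 0)
    (fa fb : A)
    (hSerreLong : fb * fb * fa - (p ^ 2 + (p ^ 2)⁻¹) • (fb * fa * fb) + fa * fb * fb = 0)
    (hSerreShort : fa * fa * fa * fb - qNum p (p ^ 3) • (fa * fa * fb * fa)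
        + qNum p (p ^ 3) • (fa * fb * fa * fa) - fb * fa * fa * fa = 0)
    (hden : ∀ i : ℕ, 1 ≤ i → i ≤ 3 → qNum p (t * p ^ i) ≠ 0) :
    fa * fdelta p (t * p) fa fb
      = (qNum p (t * p) / qNum p (t * p ^ 3)) • (fdelta p t fa fb * fa) := by
  have hpp : p - p⁻¹ ≠ 0 := by
    intro h
    apply hp 2 (by norm_num)
    have hpi : p = p⁻¹ := sub_eq_zero.mp h
    have : p ^ 2 = p * p⁻¹ := by rw [← hpi]; ring
    rw [this, mul_inv_cancel₀ hp0]
  have hp2 : p ^ 2 - 1 ≠ 0 := sub_ne_zero.mpr (hp 2 (by norm_num))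
  have hu1 : qNum p (t * p) ≠ 0 := by have := hden 1 le_rfl (by norm_num); simpa using this
  have hu2 : qNum p (t * p ^ 2) ≠ 0 := hden 2 (by norm_num) (by norm_num)
  have hu3 : qNum p (t * p ^ 3) ≠ 0 := hden 3 (by norm_num) le_rfl
  have qAlt : ∀ u : ℂ, u ≠ 0 → qNum p u = ((u ^ 2 - 1) * p) / (u * (p ^ 2 - 1)) := by
    intro u hu
    rw [qNum, div_eq_div_iff hpp (mul_ne_zero hu hp2)]
    field_simp [hu, hp0]
  have hne : ∀ k : ℕ, t * p ^ k ≠ 0 := fun k => mul_ne_zero ht (pow_ne_zero k hp0)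
  have d2 : p ^ 2 * (p ^ 2 - 1) ≠ 0 := mul_ne_zero (pow_ne_zero 2 hp0) hp2
  have d3 : p ^ 3 * (p ^ 2 - 1) ≠ 0 := mul_ne_zero (pow_ne_zero 3 hp0) hp2
  have e0 : t * (p ^ 2 - 1) ≠ 0 := mul_ne_zero ht hp2
  have e1 : t * p * (p ^ 2 - 1) ≠ 0 := mul_ne_zero (by simpa using hne 1) hp2
  have e2 : t * p ^ 2 * (p ^ 2 - 1) ≠ 0 := mul_ne_zero (hne 2) hp2
  have e3 : t * p ^ 3 * (p ^ 2 - 1) ≠ 0 := mul_ne_zero (hne 3) hp2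
  have key1 : qNum p (p ^ 3) * qNum p (t * p ^ 2)
      = qNum p (p ^ 2) * qNum p (t * p ^ 3) + qNum p t := by
    rw [qAlt _ (pow_ne_zero 3 hp0), qAlt _ (hne 2), qAlt _ (pow_ne_zero 2 hp0),
      qAlt _ (hne 3), qAlt _ ht, div_mul_div_comm, div_mul_div_comm,
      div_add_div _ _ (mul_ne_zero d2 e3) e0,
      div_eq_div_iff (mul_ne_zero d3 e2) (mul_ne_zero (mul_ne_zero d2 e3) e0)]
    ring
  have key2 : qNum p (p ^ 3) * qNum p (t * p)
      = qNum p (t * p ^ 3) + qNum p (p ^ 2) * qNum p t := by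
    rw [qAlt _ (pow_ne_zero 3 hp0), qAlt _ (by simpa using hne 1), qAlt _ (hne 3),
      qAlt _ (pow_ne_zero 2 hp0), qAlt _ ht, div_mul_div_comm, div_mul_div_comm,
      div_add_div _ _ e3 (mul_ne_zero d2 e0),
      div_eq_div_iff (mul_ne_zero d3 e1) (mul_ne_zero e3 (mul_ne_zero d2 e0))]
    ring
  rw [← sub_eq_zero]
  set c0 := qNum p t with hc0
  set c1 := qNum p (t * p) with hc1
  set c2 := qNum p (t * p ^ 2) with hc2
  set c3 := qNum p (t * p ^ 3) with hc3
  set b2 := qNum p (p ^ 2) with hb2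
  set b3 := qNum p (p ^ 3) with hb3
  have key : fa * fdelta p (t * p) fa fb - (c1 / c3) • (fdelta p t fa fb * fa)
      = ((p ^ 2)⁻¹ * (c1 / c3))
        • (fa * fa * fa * fb - b3 • (fa * fa * fb * fa)
          + b3 • (fa * fb * fa * fa) - fb * fa * fa * fa) := by
    rw [fdelta, fdelta, show t * p * p ^ 2 = t * p ^ 3 from by ring,
      show t * p * p = t * p ^ 2 from by ring]
    rw [← hc1, ← hc3, ← hc2, ← hc0, ← hb2]
    simp only [smul_sub, smul_add, mul_sub, mul_add, sub_mul, add_mul,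
      mul_smul_comm, smul_mul_assoc, smul_smul, mul_assoc]
    match_scalars
    · field_simp [hu1, hu2, hu3, hp0]
    · field_simp [hu1, hu2, hu3, hp0]
      linear_combination key1
    · field_simp [hu1, hu2, hu3, hp0]
      linear_combination -key2
    · field_simp [hu1, hu2, hu3, hp0]
  rw [key, hSerreShort, smul_zero]
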